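/- The functions φ(r) = (1+r²)^{3/5}·f and ψ(r) = (4/5)(1+r²)^{-2/5} (with f > 0 constant in r) satisfy the system of ordinary differential equations ∂(φ²)/∂r = 3 r f φ ψ and ∂(φψ)/∂r = (r/2) f ψ²; moreover the general solution with f > 0 is φ = (1/h₁)(h₁ r² + h₂)^{3/5} f, ψ = (4/5)(h₁ r² + h₂)^{-2/5} for constants h₁ > 0, h₂ > 0. -/

import Mathlib

/-!
Statement 13: φ(r) = (1+r²)^{3/5}·f and ψ(r) = (4/5)(1+r²)^{-2/5} solve the ODE
system ∂(φ²)/∂r = 3 r f φ ψ, ∂(φψ)/∂r = (r/2) f ψ², and every positive solution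
with f > 0 has the form φ = (1/h₁)(h₁r²+h₂)^{3/5} f, ψ = (4/5)(h₁r²+h₂)^{-2/5}
for constants h₁ > 0, h₂ > 0.
-/

open Real

theorem bryant_salamon_ode (f : ℝ) (hf : 0 < f) :
    (∀ r : ℝ, 0 ≤ r →
      HasDerivAt (fun s : ℝ => ((1 + s ^ 2) ^ ((3 : ℝ) / 5) * f) ^ 2)
        (3 * r * f * ((1 + r ^ 2) ^ ((3 : ℝ) / 5) * f) *
          (4 / 5 * (1 + r ^ 2) ^ (-(2 : ℝ) / 5))) r ∧
      HasDerivAt (fun s : ℝ =>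
          ((1 + s ^ 2) ^ ((3 : ℝ) / 5) * f) * (4 / 5 * (1 + s ^ 2) ^ (-(2 : ℝ) / 5)))
        (r / 2 * f * (4 / 5 * (1 + r ^ 2) ^ (-(2 : ℝ) / 5)) ^ 2) r) ∧
    (∀ φ ψ : ℝ → ℝ,
      (∀ r, 0 ≤ r → 0 < φ r ∧ 0 < ψ r) →
      (∀ r, 0 ≤ r → HasDerivAt (fun s => φ s ^ 2) (3 * r * f * φ r * ψ r) r) →
      (∀ r, 0 ≤ r → HasDerivAt (fun s => φ s * ψ s) (r / 2 * f * ψ r ^ 2) r) →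
      ∃ h₁ h₂ : ℝ, 0 < h₁ ∧ 0 < h₂ ∧ ∀ r, 0 ≤ r →
        φ r = 1 / h₁ * (h₁ * r ^ 2 + h₂) ^ ((3 : ℝ) / 5) * f ∧
        ψ r = 4 / 5 * (h₁ * r ^ 2 + h₂) ^ (-(2 : ℝ) / 5)) := by
  refine ⟨fun r hr => ⟨?_, ?_⟩, ?_⟩
  ·
      have h : (0:ℝ) < 1 + r ^ 2 := by positivity
      have hbase : HasDerivAt (fun s : ℝ => 1 + s ^ 2) (2 * r) r := by
        simpa using ((hasDerivAt_pow 2 r).const_add 1)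
      have h1 := (hbase.rpow_const (p := (3:ℝ)/5) (Or.inl h.ne')).mul_const f
      have h2 := h1.fun_pow 2
      convert h2 using 1
      case e'_4 => rfl
      case e'_5 => rfl
      rw [show ((3:ℝ)/5 - 1) = -(2:ℝ)/5 by norm_num]
      push_cast
      ring
  ·
      have h : (0:ℝ) < 1 + r ^ 2 := by positivity
      have hbase : HasDerivAt (fun s : ℝ => 1 + s ^ 2) (2 * r) r := by
        simpa using ((hasDerivAt_pow 2 r).const_add 1)
      have h1 := (hbase.rpow_const (p := (3:ℝ)/5) (Or.inl h.ne')).mul_const f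
      have h4 := (hbase.rpow_const (p := -(2:ℝ)/5) (Or.inl h.ne')).const_mul (4/5 : ℝ)
      have h5 := h1.fun_mul h4
      convert h5 using 1
      case e'_4 => rfl
      case e'_5 => rfl
      rw [show ((3:ℝ)/5 - 1) = -(2:ℝ)/5 by norm_num,
          show (-(2:ℝ)/5 - 1) = -(7:ℝ)/5 by norm_num]
      have e1 : (1+r^2) ^ ((3:ℝ)/5) * (1+r^2) ^ (-(7:ℝ)/5) = (1+r^2) ^ (-(4:ℝ)/5) := by
        rw [← Real.rpow_add h]; norm_num
      have e2 : (1+r^2) ^ (-(2:ℝ)/5) * (1+r^2) ^ (-(2:ℝ)/5) = (1+r^2) ^ (-(4:ℝ)/5) := by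
        rw [← Real.rpow_add h]; norm_num
      linear_combination (16/25*r*f)*e1 - (16/25*r*f)*e2
  ·
      intro φ ψ hpos hode1 hode2
      -- derivative of φ within Ici 0
      have hφ' : ∀ r, 0 ≤ r → HasDerivWithinAt φ (3/2 * r * f * ψ r) (Set.Ici 0) r := by
        intro r hr
        have hφr := (hpos r hr).1
        have hsq := ((hode1 r hr).hasDerivWithinAt (s := Set.Ici 0)).sqrt
          (by positivity : φ r ^ 2 ≠ 0)
        have hcongr : HasDerivWithinAt φ
            (3 * r * f * φ r * ψ r / (2 * Real.sqrt (φ r ^ 2))) (Set.Ici 0) r := by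
          refine hsq.congr (fun y hy => ?_) ?_
          · exact (Real.sqrt_sq (hpos y hy).1.le).symm
          · exact (Real.sqrt_sq hφr.le).symm
        have : 3 * r * f * φ r * ψ r / (2 * Real.sqrt (φ r ^ 2)) = 3/2 * r * f * ψ r := by
          rw [Real.sqrt_sq hφr.le]; field_simp
        rwa [this] at hcongr
      -- derivative of ψ within Ici 0
      have hψ' : ∀ r, 0 ≤ r → HasDerivWithinAt ψ (-(r * f * ψ r ^ 2) / φ r) (Set.Ici 0) r := by
        intro r hr
        have hφr := (hpos r hr).1
        have hdiv := ((hode2 r hr).hasDerivWithinAt (s := Set.Ici 0)).fun_div (hφ' r hr) hφr.ne'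
        have hcongr : HasDerivWithinAt ψ
            ((r / 2 * f * ψ r ^ 2 * φ r - φ r * ψ r * (3/2 * r * f * ψ r)) / φ r ^ 2)
            (Set.Ici 0) r := by
          refine hdiv.congr (fun y hy => ?_) ?_
          · field_simp [(hpos y hy).1.ne']
          · field_simp [hφr.ne']
        have : (r / 2 * f * ψ r ^ 2 * φ r - φ r * ψ r * (3/2 * r * f * ψ r)) / φ r ^ 2
            = -(r * f * ψ r ^ 2) / φ r := by
          field_simp; ring
        rwa [this] at hcongr
      set c : ℝ := ψ 0 * φ 0 ^ ((2:ℝ)/3) with hc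
      set d : ℝ := φ 0 ^ ((5:ℝ)/3) with hd
      have hφ0 := (hpos 0 le_rfl).1
      have hψ0 := (hpos 0 le_rfl).2
      have hcpos : 0 < c := mul_pos hψ0 (Real.rpow_pos_of_pos hφ0 _)
      have hdpos : 0 < d := Real.rpow_pos_of_pos hφ0 _
      -- G = ψ * φ^(2/3) has derivative 0
      have hG : ∀ r, 0 ≤ r →
          HasDerivWithinAt (fun s => ψ s * φ s ^ ((2:ℝ)/3)) 0 (Set.Ici 0) r := by
        intro r hr
        have hφr := (hpos r hr).1
        have h := (hψ' r hr).mul ((hφ' r hr).rpow_const (p := (2:ℝ)/3) (Or.inl hφr.ne'))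
        have hval : -(r * f * ψ r ^ 2) / φ r * φ r ^ ((2:ℝ)/3)
            + ψ r * (3/2 * r * f * ψ r * ((2:ℝ)/3) * φ r ^ ((2:ℝ)/3 - 1)) = 0 := by
          rw [Real.rpow_sub hφr, Real.rpow_one]
          field_simp
          ring
        rwa [hval] at h
      -- constancy machinery
      have hconst : ∀ (g : ℝ → ℝ), (∀ r, 0 ≤ r → HasDerivWithinAt g 0 (Set.Ici 0) r) →
          ∀ r, 0 ≤ r → g r = g 0 := by
        intro g hg r hr
        have hcont : ContinuousOn g (Set.Icc 0 r) := fun x hx =>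
          ((hg x hx.1).continuousWithinAt).mono Set.Icc_subset_Ici_self
        have hderiv : ∀ x ∈ Set.Ico (0:ℝ) r, HasDerivWithinAt g 0 (Set.Ici x) x :=
          fun x hx => (hg x hx.1).mono (Set.Ici_subset_Ici.2 hx.1)
        exact constant_of_has_deriv_right_zero hcont hderiv r (Set.mem_Icc.2 ⟨hr, le_rfl⟩)
      have hGc : ∀ r, 0 ≤ r → ψ r * φ r ^ ((2:ℝ)/3) = c :=
        hconst _ hG
      -- F = φ^(5/3) - (5/4) f c r² has derivative 0
      have hF : ∀ r, 0 ≤ r → HasDerivWithinAt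
          (fun s => φ s ^ ((5:ℝ)/3) - 5/4 * f * c * s ^ 2) 0 (Set.Ici 0) r := by
        intro r hr
        have hφr := (hpos r hr).1
        have h1 := (hφ' r hr).rpow_const (p := (5:ℝ)/3) (Or.inl hφr.ne')
        have h2 : HasDerivWithinAt (fun s : ℝ => 5/4 * f * c * s ^ 2)
            (5/4 * f * c * (2 * r)) (Set.Ici 0) r := by
          simpa [mul_assoc] using
            (((hasDerivAt_pow 2 r).const_mul (5/4 * f * c)).hasDerivWithinAt (s := Set.Ici 0))
        have h := h1.sub h2
        have hval : 3/2 * r * f * ψ r * ((5:ℝ)/3) * φ r ^ ((5:ℝ)/3 - 1)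
            - 5/4 * f * c * (2 * r) = 0 := by
          rw [show ((5:ℝ)/3 - 1) = (2:ℝ)/3 by norm_num, ← hGc r hr]
          ring
        rwa [hval] at h
      have hFc := hconst _ hF
      have hE : ∀ r, 0 ≤ r → φ r ^ ((5:ℝ)/3) = 5/4 * f * c * r ^ 2 + d := by
        intro r hr
        have := hFc r hr
        nlinarith [this]
      -- constants
      set a : ℝ := 4 / (5 * c) with ha
      have hapos : 0 < a := by positivity
      refine ⟨f * a ^ ((3:ℝ)/2), d * a ^ ((5:ℝ)/2), by positivity, by positivity, ?_⟩
      intro r hr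
      have hφr := (hpos r hr).1
      have hψr := (hpos r hr).2
      set E : ℝ := 5/4 * f * c * r ^ 2 + d with hEdef
      have hEpos : 0 < E := by positivity
      have hφE : φ r = E ^ ((3:ℝ)/5) := by
        have h1 : (φ r ^ ((5:ℝ)/3)) ^ ((3:ℝ)/5) = φ r := by
          rw [← Real.rpow_mul hφr.le, show (5:ℝ)/3*(3/5) = 1 by norm_num, Real.rpow_one]
        rw [← h1, hE r hr]
      have hca : (5:ℝ)/4 * c * a = 1 := by
        rw [ha]; field_simp
      have hkey : f * a ^ ((3:ℝ)/2) * r ^ 2 + d * a ^ ((5:ℝ)/2) = a ^ ((5:ℝ)/2) * E := by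
        have h52 : a ^ ((5:ℝ)/2) = a ^ ((3:ℝ)/2) * a := by
          rw [← Real.rpow_add_one hapos.ne' ((3:ℝ)/2)]; norm_num
        rw [h52, hEdef]
        linear_combination (-(f * a ^ ((3:ℝ)/2) * r ^ 2)) * hca
      have ha32 : (0:ℝ) < a ^ ((3:ℝ)/2) := Real.rpow_pos_of_pos hapos _
      have ha52 : (0:ℝ) < a ^ ((5:ℝ)/2) := Real.rpow_pos_of_pos hapos _
      constructor
      · rw [hkey, Real.mul_rpow ha52.le hEpos.le, ← Real.rpow_mul hapos.le,
          show ((5:ℝ)/2 * (3/5)) = (3:ℝ)/2 by norm_num, hφE]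
        field_simp
      · -- ψ r = c / φ r ^ (2/3) = c * E^(-2/5)
        have hψeq : ψ r = c * E ^ (-(2:ℝ)/5) := by
          have h1 := hGc r hr
          have h2 : φ r ^ ((2:ℝ)/3) = E ^ ((2:ℝ)/5) := by
            rw [hφE, ← Real.rpow_mul hEpos.le]; norm_num
          have h3 : E ^ ((2:ℝ)/5) * E ^ (-(2:ℝ)/5) = 1 := by
            rw [← Real.rpow_add hEpos]; norm_num
          rw [h2] at h1
          calc ψ r = ψ r * (E ^ ((2:ℝ)/5) * E ^ (-(2:ℝ)/5)) := by rw [h3, mul_one]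
            _ = (ψ r * E ^ ((2:ℝ)/5)) * E ^ (-(2:ℝ)/5) := by ring
            _ = c * E ^ (-(2:ℝ)/5) := by rw [h1]
        rw [hψeq, hkey, Real.mul_rpow ha52.le hEpos.le, ← Real.rpow_mul hapos.le,
          show ((5:ℝ)/2 * (-2/5)) = (-1:ℝ) by norm_num, Real.rpow_neg_one]
        have hca2 : c * a = 4/5 := by rw [ha]; field_simp
        rw [← hca2, mul_assoc c a, mul_inv_cancel_left₀ hapos.ne']
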